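/- Let f : [0,1] → ℝ be a continuous function such that the upper-scaled oscillation L_f(x) is finite for all except countably many x ∈ [0,1]. Then for Lebesgue-almost every y ∈ ℝ, the level set f⁻¹(y) is finite. -/

import Mathlib

open Set MeasureTheory Metric Filter
open scoped ENNReal NNReal Topology

/-- Lower-scaled oscillation of `f` with domain `A`:
`l_f(x) = liminf_{r→0⁺} (sup_{y ∈ A, dist y x ≤ r} dist (f y) (f x)) / r`. -/
noncomputable def lowerScaledOsc {E F : Type*} [PseudoMetricSpace E] [PseudoMetricSpace F]
    (A : Set E) (f : E → F) (x : E) : ℝ≥0∞ :=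
  Filter.liminf
    (fun r : ℝ =>
      (⨆ (y : E) (_ : y ∈ A) (_ : dist y x ≤ r), ENNReal.ofReal (dist (f y) (f x))) /
        ENNReal.ofReal r)
    (nhdsWithin 0 (Set.Ioi 0))

/-- Upper-scaled oscillation of `f` with domain `A`:
`L_f(x) = limsup_{r→0⁺} (sup_{y ∈ A, dist y x ≤ r} dist (f y) (f x)) / r`. -/
noncomputable def upperScaledOsc {E F : Type*} [PseudoMetricSpace E] [PseudoMetricSpace F]
    (A : Set E) (f : E → F) (x : E) : ℝ≥0∞ :=
  Filter.limsup
    (fun r : ℝ =>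
      (⨆ (y : E) (_ : y ∈ A) (_ : dist y x ≤ r), ENNReal.ofReal (dist (f y) (f x))) /
        ENNReal.ofReal r)
    (nhdsWithin 0 (Set.Ioi 0))

namespace Stmt7


noncomputable section

def eta (m : ℕ) : ℝ := 1 / (2 * (m + 1))

lemma eta_pos (m : ℕ) : 0 < eta m := by unfold eta; positivity

lemma eta_le_one (m : ℕ) : eta m ≤ 1 := by
  rw [eta, div_le_one (by positivity)]
  nlinarith [Nat.cast_nonneg (α := ℝ) m]

def Dset (g : ℝ → ℝ) (m : ℕ) : Set ℝ :=
  {x ∈ Set.Icc (0:ℝ) 1 |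
    ∀ z ∈ Set.Icc (0:ℝ) 1, dist z x ≤ 2 * eta m → dist (g z) (g x) ≤ (m + 1) * dist z x}

def DC (g : ℝ → ℝ) (m : ℕ) : Set ℝ := closure (Dset g m)

lemma DC_subset_Icc (g : ℝ → ℝ) (m : ℕ) : DC g m ⊆ Set.Icc 0 1 := by
  have : Dset g m ⊆ Set.Icc 0 1 := fun _ h => h.1
  simpa [DC] using closure_minimal this isClosed_Icc

lemma isClosed_DC (g : ℝ → ℝ) (m : ℕ) : IsClosed (DC g m) := isClosed_closure

lemma cone {g : ℝ → ℝ} (hg : ContinuousOn g (Set.Icc 0 1)) (m : ℕ) {s z : ℝ}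
    (hs : s ∈ DC g m) (hz : z ∈ Set.Icc (0:ℝ) 1) (hd : dist z s ≤ eta m) :
    dist (g z) (g s) ≤ (m + 1) * dist z s := by
  obtain ⟨w, hw, hws⟩ := mem_closure_iff_seq_limit.1 hs
  have hwI : ∀ k, w k ∈ Set.Icc (0:ℝ) 1 := fun k => (hw k).1
  have hsI : s ∈ Set.Icc (0:ℝ) 1 := DC_subset_Icc g m hs
  have htw : Filter.Tendsto (fun k => g (w k)) atTop (𝓝 (g s)) := by
    have : Filter.Tendsto w atTop (𝓝[Set.Icc (0:ℝ) 1] s) :=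
      tendsto_nhdsWithin_of_tendsto_nhds_of_eventually_within w hws
        (Filter.Eventually.of_forall hwI)
    exact ((hg s hsI).tendsto).comp this
  have hev : ∀ᶠ k in atTop, dist (g z) (g (w k)) ≤ (m + 1) * dist z (w k) := by
    have : ∀ᶠ k in atTop, dist (w k) s ≤ eta m := by
      have := (tendsto_iff_dist_tendsto_zero.1 hws)
      exact this.eventually_le_const (by simpa using eta_pos m) |>.mono (by simp)
    filter_upwards [this] with k hk
    refine (hw k).2 z hz ?_
    have h2 : dist z (w k) ≤ dist z s + dist s (w k) := dist_triangle _ _ _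
    have h3 : dist s (w k) ≤ eta m := by rw [dist_comm]; exact hk
    linarith
  have t1 : Filter.Tendsto (fun k => dist (g z) (g (w k))) atTop (𝓝 (dist (g z) (g s))) :=
    (Filter.Tendsto.dist tendsto_const_nhds htw)
  have t2 : Filter.Tendsto (fun k => (m + 1 : ℝ) * dist z (w k)) atTop
      (𝓝 ((m + 1) * dist z s)) :=
    Filter.Tendsto.const_mul _ (Filter.Tendsto.dist tendsto_const_nhds hws)
  exact le_of_tendsto_of_tendsto t1 t2 hev

open scoped Classical in
def ell (g : ℝ → ℝ) (m : ℕ) (s : ℝ) : ℝ :=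
  if h : (DC g m ∩ Set.Ioi s).Nonempty then
    min (eta m) (sInf (DC g m ∩ Set.Ioi s) - s) else eta m

lemma ell_le_eta (g : ℝ → ℝ) (m : ℕ) (s : ℝ) : ell g m s ≤ eta m := by
  rw [ell]; split <;> simp [min_le_left]

lemma gap_disjoint (g : ℝ → ℝ) (m : ℕ) (s : ℝ) :
    Set.Ioo s (s + ell g m s) ∩ DC g m = ∅ := by
  rw [Set.eq_empty_iff_forall_notMem]
  rintro x ⟨⟨hx1, hx2⟩, hxD⟩
  have hxIoi : x ∈ DC g m ∩ Set.Ioi s := ⟨hxD, hx1⟩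
  have hne : (DC g m ∩ Set.Ioi s).Nonempty := ⟨x, hxIoi⟩
  have hbdd : BddBelow (DC g m ∩ Set.Ioi s) := ⟨s, fun w hw => le_of_lt hw.2⟩
  have h1 : sInf (DC g m ∩ Set.Ioi s) ≤ x := csInf_le hbdd hxIoi
  rw [ell, dif_pos hne] at hx2
  have : x < s + (sInf (DC g m ∩ Set.Ioi s) - s) := lt_of_lt_of_le hx2 (by
    exact add_le_add_right (min_le_right _ _) s)
  linarith

lemma le_ell (g : ℝ → ℝ) (m : ℕ) {s z : ℝ} (hsz : s < z)
    (h : ∀ w ∈ DC g m, w ∉ Set.Ioc s z) : min (eta m) (z - s) ≤ ell g m s := by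
  rw [ell]
  split
  · rename_i hne
    refine min_le_min le_rfl ?_
    have : z ≤ sInf (DC g m ∩ Set.Ioi s) := by
      apply le_csInf hne
      rintro w ⟨hwD, hws⟩
      by_contra hlt
      exact h w hwD ⟨hws, le_of_lt (not_le.1 hlt)⟩
    linarith
  · exact min_le_left _ _

def Rset (g : ℝ → ℝ) (m : ℕ) : Set ℝ := {s ∈ DC g m | 0 < ell g m s}

def Jset (g : ℝ → ℝ) (m : ℕ) (s : ℝ) : Set ℝ :=
  Set.Icc (g s - (m + 1) * ell g m s) (g s + (m + 1) * ell g m s)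

lemma countable_Rset (g : ℝ → ℝ) (m : ℕ) : (Rset g m).Countable := by
  have hsub : Rset g m ⊆ ⋃ q : {q : ℚ // 0 < q},
      {s | s ∈ DC g m ∧ Set.Ioo s (s + (q : ℝ)) ∩ DC g m = ∅} := by
    rintro s ⟨hsD, hsl⟩
    obtain ⟨q, hq0, hql⟩ := exists_rat_btwn hsl
    have hq0' : 0 < q := by exact_mod_cast hq0
    refine Set.mem_iUnion.2 ⟨⟨q, hq0'⟩, hsD, ?_⟩
    have := gap_disjoint g m s
    rw [Set.eq_empty_iff_forall_notMem] at this ⊢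
    rintro x ⟨⟨h1, h2⟩, h3⟩
    exact this x ⟨⟨h1, by linarith⟩, h3⟩
  refine Set.Countable.mono hsub ?_
  refine Set.countable_iUnion fun q => ?_
  apply Set.countable_of_injective_of_countable_image
    (f := fun s => (⌊s / (q : ℝ)⌋ : ℤ))
  · rintro a ⟨haD, haE⟩ b ⟨hbD, hbE⟩ hab
    by_contra hne
    wlog hlt : a < b generalizing a b
    · exact this hbD hbE haD haE hab.symm (Ne.symm hne) (lt_of_le_of_ne (not_lt.1 hlt) (Ne.symm hne))
    have hq : (0:ℝ) < (q : ℝ) := by exact_mod_cast q.2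
    have hab' : (⌊a / (q:ℝ)⌋ : ℤ) = ⌊b / (q:ℝ)⌋ := hab
    have h1 : b - a < q := by
      have h4 : b / (q:ℝ) < (⌊a/(q:ℝ)⌋ : ℝ) + 1 := by
        rw [hab']; exact Int.lt_floor_add_one _
      have h3 : (⌊a / (q:ℝ)⌋ : ℝ) ≤ a / q := Int.floor_le _
      have h5 : b / (q:ℝ) - a / q < 1 := by linarith
      calc b - a = (b/(q:ℝ) - a/q) * q := by field_simp
      _ < 1 * q := mul_lt_mul_of_pos_right h5 hq
      _ = q := one_mul _
    rw [Set.eq_empty_iff_forall_notMem] at haE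
    exact haE b ⟨⟨hlt, by linarith⟩, hbD⟩
  · exact Set.to_countable _

lemma lipschitzOnDC {g : ℝ → ℝ} (hg : ContinuousOn g (Set.Icc 0 1)) (m : ℕ) :
    ∃ K : ℝ≥0, LipschitzOnWith K g (DC g m) := by
  obtain ⟨M, hM⟩ := (isCompact_Icc (a := (0:ℝ)) (b := 1)).exists_bound_of_continuousOn hg
  have hM0 : 0 ≤ M := le_trans (norm_nonneg _) (hM 0 (by simp))
  refine ⟨Real.toNNReal (max ((m:ℝ) + 1) (2 * M / eta m)), ?_⟩
  rw [lipschitzOnWith_iff_dist_le_mul]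
  intro a ha b hb
  have haI := DC_subset_Icc g m ha
  have hbI := DC_subset_Icc g m hb
  have hcoe : (Real.toNNReal (max ((m:ℝ) + 1) (2 * M / eta m)) : ℝ)
      = max ((m:ℝ) + 1) (2 * M / eta m) := by
    rw [Real.coe_toNNReal]
    exact le_trans (by positivity) (le_max_left _ _)
  rw [hcoe]
  rcases le_or_gt (dist a b) (eta m) with hsmall | hbig
  · have := cone hg m hb haI hsmall
    calc dist (g a) (g b) ≤ ((m:ℝ) + 1) * dist a b := this
    _ ≤ _ := mul_le_mul_of_nonneg_right (le_max_left _ _) dist_nonneg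
  · have h1 : dist (g a) (g b) ≤ 2 * M := by
      have n1 := hM a haI
      have n2 := hM b hbI
      rw [Real.dist_eq]
      rw [Real.norm_eq_abs] at n1 n2
      have := abs_sub_abs_le_abs_sub (g a) (g b)
      have := abs_sub (g a) (g b)
      calc |g a - g b| ≤ |g a| + |g b| := abs_sub _ _
      _ ≤ 2 * M := by linarith
    calc dist (g a) (g b) ≤ 2 * M := h1
    _ = (2 * M / eta m) * eta m := (div_mul_cancel₀ (2*M) (ne_of_gt (eta_pos m))).symm
    _ ≤ (2 * M / eta m) * dist a b := by
        apply mul_le_mul_of_nonneg_left (le_of_lt hbig)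
          (div_nonneg (by linarith) (le_of_lt (eta_pos m)))
    _ ≤ _ := mul_le_mul_of_nonneg_right (le_max_right _ _) dist_nonneg

lemma lemmaA {g : ℝ → ℝ} (hg : ContinuousOn g (Set.Icc 0 1)) (m : ℕ) :
    ∀ᵐ y ∂(volume : Measure ℝ), ¬ (DC g m ∩ g ⁻¹' {y}).Infinite := by
  obtain ⟨K, hK⟩ := lipschitzOnDC hg m
  obtain ⟨G, hG, hEq⟩ := hK.extend_real
  set Z₁ : Set ℝ := {x | ¬ DifferentiableAt ℝ G x} with hZ₁
  set Z₂ : Set ℝ := {x | DifferentiableAt ℝ G x ∧ deriv G x = 0} with hZ₂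
  have himg : volume (G '' (Z₁ ∪ Z₂)) = 0 := by
    rw [Set.image_union]
    refine measure_union_null ?_ ?_
    · have hz1 : volume Z₁ = 0 := by
        have := hG.ae_differentiableAt (μ := volume)
        simpa [hZ₁, ae_iff] using this
      have h1 : (μH[1] : Measure ℝ) (G '' Z₁) ≤ (K : ℝ≥0∞) ^ (1:ℝ) * μH[1] Z₁ :=
        hG.hausdorffMeasure_image_le zero_le_one Z₁
      simp only [MeasureTheory.hausdorffMeasure_real] at h1
      rw [hz1, mul_zero] at h1
      exact le_antisymm h1 zero_le
    · refine MeasureTheory.addHaar_image_eq_zero_of_det_fderivWithin_eq_zero volume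
        (f' := fun _ => (0 : ℝ →L[ℝ] ℝ)) ?_ ?_
      · rintro x ⟨hdiff, hderiv⟩
        have h0 : HasDerivAt G 0 x := by
          have := hdiff.hasDerivAt
          rwa [hderiv] at this
        exact h0.hasFDerivAt.hasFDerivWithinAt.congr_fderiv (by ext t; simp)
      · intro x _
        simp [ContinuousLinearMap.det]
  have hsub : {y : ℝ | (DC g m ∩ g ⁻¹' {y}).Infinite} ⊆ G '' (Z₁ ∪ Z₂) := by
    intro y hy
    set S := DC g m ∩ g ⁻¹' {y} with hS
    have hSsub : S ⊆ Set.Icc 0 1 := fun x hx => DC_subset_Icc g m hx.1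
    let e := hy.natEmbedding
    set x : ℕ → ℝ := fun n => (e n : ℝ) with hx
    have hxS : ∀ n, x n ∈ S := fun n => (e n).2
    have hxinj : Function.Injective x := fun a b hab => e.injective (Subtype.ext hab)
    obtain ⟨xs, hxsI, φ, hφ, hconv⟩ := isCompact_Icc.tendsto_subseq (fun n => hSsub (hxS n))
    have hinj2 : Function.Injective (x ∘ φ) := hxinj.comp hφ.injective
    obtain ⟨k₀, hk₀⟩ : ∃ k₀, ∀ k, x (φ (k + k₀)) ≠ xs := by
      by_cases hex : ∃ j, x (φ j) = xs
      · obtain ⟨j, hj⟩ := hex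
        refine ⟨j + 1, fun k hk => ?_⟩
        have : x (φ (k + (j+1))) = x (φ j) := by rw [hk, hj]
        have := hinj2 this
        omega
      · exact ⟨0, fun k hk => hex ⟨_, hk⟩⟩
    set v : ℕ → ℝ := fun k => x (φ (k + k₀)) with hv
    have hvS : ∀ k, v k ∈ S := fun k => hxS _
    have hvconv : Filter.Tendsto v atTop (𝓝 xs) := by
      have := hconv.comp (tendsto_add_atTop_nat k₀)
      simpa [hv, Function.comp_def] using this
    have hvney : ∀ k, v k ≠ xs := hk₀
    have hGv : ∀ k, G (v k) = y := by
      intro k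
      have h1 : g (v k) = y := (hvS k).2
      rw [← hEq (hvS k).1, h1]
    have hGxs : G xs = y := by
      have t1 : Filter.Tendsto (fun k => G (v k)) atTop (𝓝 (G xs)) :=
        (hG.continuous.tendsto xs).comp hvconv
      have t2 : Filter.Tendsto (fun k => G (v k)) atTop (𝓝 y) := by
        simpa [hGv] using (tendsto_const_nhds : Filter.Tendsto (fun _ : ℕ => y) atTop (𝓝 y))
      exact tendsto_nhds_unique t1 t2
    have hxsZ : xs ∈ Z₁ ∪ Z₂ := by
      by_cases hdiff : DifferentiableAt ℝ G xs
      · right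
        refine ⟨hdiff, ?_⟩
        have hd := hdiff.hasDerivAt
        have hslope := hasDerivAt_iff_tendsto_slope.1 hd
        have hvp : Filter.Tendsto v atTop (𝓝[≠] xs) :=
          tendsto_nhdsWithin_of_tendsto_nhds_of_eventually_within v hvconv
            (Filter.Eventually.of_forall hvney)
        have t1 : Filter.Tendsto (fun k => slope G xs (v k)) atTop (𝓝 (deriv G xs)) :=
          hslope.comp hvp
        have hzero : ∀ k, slope G xs (v k) = 0 := by
          intro k
          rw [slope_def_field, hGv k, hGxs]
          simp
        have t2 : Filter.Tendsto (fun k => slope G xs (v k)) atTop (𝓝 0) := by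
          simpa [hzero] using (tendsto_const_nhds : Filter.Tendsto (fun _ : ℕ => (0:ℝ)) atTop (𝓝 0))
        exact tendsto_nhds_unique t1 t2
      · exact Or.inl hdiff
    exact ⟨xs, hxsZ, hGxs⟩
  have hnull : volume {y : ℝ | (DC g m ∩ g ⁻¹' {y}).Infinite} = 0 :=
    measure_mono_null hsub himg
  exact (measure_eq_zero_iff_ae_notMem.mp hnull).mono (fun y hy => hy)

lemma volume_Jset (g : ℝ → ℝ) (m : ℕ) (s : ℝ) (h : 0 ≤ ell g m s) :
    volume (Jset g m s) = ENNReal.ofReal (2 * ((m:ℝ) + 1)) * volume (Set.Ioo s (s + ell g m s)) := by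
  rw [Jset, Real.volume_Icc, Real.volume_Ioo]
  rw [← ENNReal.ofReal_mul (by positivity)]
  congr 1
  ring

lemma lemmaC (g : ℝ → ℝ) (m : ℕ) :
    ∀ᵐ y ∂(volume : Measure ℝ), {s | s ∈ Rset g m ∧ y ∈ Jset g m s}.Finite := by
  haveI : Countable ↥(Rset g m) := (countable_Rset g m).to_subtype
  set Φ : ℝ → ℝ≥0∞ := fun y => ∑' s : ↥(Rset g m), (Jset g m (s:ℝ)).indicator (fun _ => (1:ℝ≥0∞)) y
    with hΦ
  have hmeas : Measurable Φ :=
    Measurable.ennreal_tsum fun s => Measurable.indicator measurable_const measurableSet_Icc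
  have hdisj : Pairwise (Function.onFun Disjoint
      (fun s : ↥(Rset g m) => Set.Ioo (s:ℝ) ((s:ℝ) + ell g m s))) := by
    intro i j hij
    have hne : (i:ℝ) ≠ (j:ℝ) := fun h => hij (Subtype.ext h)
    have key : ∀ a b : ↥(Rset g m), (a:ℝ) < (b:ℝ) →
        Disjoint (Set.Ioo (a:ℝ) ((a:ℝ) + ell g m a)) (Set.Ioo (b:ℝ) ((b:ℝ) + ell g m b)) := by
      intro a b hab
      rw [Set.disjoint_left]
      rintro x ⟨hx1, hx2⟩ ⟨hx3, hx4⟩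
      have hbD : (b:ℝ) ∈ DC g m := b.2.1
      have : (b:ℝ) ∉ Set.Ioo (a:ℝ) ((a:ℝ) + ell g m a) := by
        intro hmem
        have := gap_disjoint g m (a:ℝ)
        rw [Set.eq_empty_iff_forall_notMem] at this
        exact this b ⟨hmem, hbD⟩
      have : ¬ ((a:ℝ) < b ∧ (b:ℝ) < (a:ℝ) + ell g m a) := fun hc => this ⟨hc.1, hc.2⟩
      push_neg at this
      have := this hab
      linarith
    rcases lt_or_gt_of_ne hne with h | h
    · exact key i j h
    · exact (key j i h).symm
  have hsum : ∑' s : ↥(Rset g m), volume (Set.Ioo (s:ℝ) ((s:ℝ) + ell g m s))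
      ≤ volume (Set.Ioo (-1 : ℝ) 3) := by
    rw [← measure_iUnion hdisj (fun s => measurableSet_Ioo)]
    apply measure_mono
    rintro x hx
    obtain ⟨s, hs⟩ := Set.mem_iUnion.1 hx
    have hsI := DC_subset_Icc g m s.2.1
    have h1 := hs.1
    have h2 := hs.2
    have h3 := ell_le_eta g m (s:ℝ)
    have h4 := eta_le_one m
    constructor
    · have := hsI.1; linarith
    · have := hsI.2; linarith
  have hint : ∫⁻ y, Φ y ∂volume < ⊤ := by
    have heq := (lintegral_tsum (μ := (volume : Measure ℝ))
      (f := fun (s : ↥(Rset g m)) (y : ℝ) => (Jset g m (s:ℝ)).indicator (fun _ => (1:ℝ≥0∞)) y)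
      (fun s => (Measurable.indicator measurable_const measurableSet_Icc).aemeasurable)).symm
    rw [show (∫⁻ y, Φ y ∂volume) = ∫⁻ y, ∑' s : ↥(Rset g m),
      (Jset g m (s:ℝ)).indicator (fun _ => (1:ℝ≥0∞)) y ∂volume from rfl, ← heq]
    have : ∀ s : ↥(Rset g m), ∫⁻ y, (Jset g m (s:ℝ)).indicator (fun _ => (1:ℝ≥0∞)) y ∂volume
        = volume (Jset g m (s:ℝ)) := by
      intro s
      rw [lintegral_indicator (show MeasurableSet (Jset g m (s:ℝ)) from measurableSet_Icc) (fun _ => (1:ℝ≥0∞))]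
      simp
    rw [tsum_congr this]
    calc ∑' s : ↥(Rset g m), volume (Jset g m (s:ℝ))
        = ∑' s : ↥(Rset g m), ENNReal.ofReal (2 * ((m:ℝ) + 1)) *
            volume (Set.Ioo (s:ℝ) ((s:ℝ) + ell g m s)) := by
          refine tsum_congr fun s => volume_Jset g m s (le_of_lt s.2.2)
      _ = ENNReal.ofReal (2 * ((m:ℝ) + 1)) *
            ∑' s : ↥(Rset g m), volume (Set.Ioo (s:ℝ) ((s:ℝ) + ell g m s)) := by
          rw [ENNReal.tsum_mul_left]
      _ ≤ ENNReal.ofReal (2 * ((m:ℝ) + 1)) * volume (Set.Ioo (-1:ℝ) 3) := by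
          exact mul_le_mul_right hsum _
      _ < ⊤ := by
          rw [Real.volume_Ioo]
          exact ENNReal.mul_lt_top ENNReal.ofReal_lt_top ENNReal.ofReal_lt_top
  have hae := ae_lt_top hmeas (ne_of_lt hint)
  filter_upwards [hae] with y hy
  by_contra hinf
  set T : Set ↥(Rset g m) := {s | y ∈ Jset g m (s:ℝ)} with hT
  have hTinf : T.Infinite := by
    intro hTfin
    apply hinf
    have himg : {s | s ∈ Rset g m ∧ y ∈ Jset g m s} = Subtype.val '' T := by
      ext s
      constructor
      · rintro ⟨h1, h2⟩; exact ⟨⟨s, h1⟩, h2, rfl⟩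
      · rintro ⟨t, ht, rfl⟩; exact ⟨t.2, ht⟩
    rw [himg]
    exact hTfin.image _
  haveI : Infinite ↥T := Set.infinite_coe_iff.2 hTinf
  have htop : (∑' _ : ↥T, (1:ℝ≥0∞)) = ⊤ := ENNReal.tsum_const_eq_top_of_ne_zero one_ne_zero
  have hle : (∑' _ : ↥T, (1:ℝ≥0∞)) ≤ Φ y := by
    refine ENNReal.summable.tsum_le_tsum_of_inj (fun t : ↥T => (t : ↥(Rset g m))) Subtype.val_injective
      (fun _ _ => zero_le) (fun t => ?_) ENNReal.summable
    have : y ∈ Jset g m ((t : ↥(Rset g m)) : ℝ) := t.2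
    simp [Set.indicator_of_mem this]
  rw [htop] at hle
  exact absurd (lt_of_le_of_lt hle hy) (lt_irrefl _)

lemma avoid_finite {A : Set ℝ} (hA : A.Finite) (x₀ : ℝ) :
    ∃ δ > 0, ∀ z ∈ A, ¬ (x₀ < z ∧ z < x₀ + δ) := by
  set V := A ∩ Set.Ioi x₀ with hV
  rcases Set.eq_empty_or_nonempty V with hemp | hne
  case inr =>
    obtain ⟨zm, hzmV, hzmin⟩ := Set.exists_min_image V id (hA.inter_of_left _) hne
    refine ⟨zm - x₀, by simpa using hzmV.2, ?_⟩
    rintro z hz ⟨h1, h2⟩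
    have := hzmin z ⟨hz, h1⟩
    simp only [id] at this
    linarith
  case inl =>
    refine ⟨1, one_pos, ?_⟩
    rintro z hz ⟨h1, _⟩
    have : z ∈ V := ⟨hz, h1⟩
    rw [hemp] at this
    exact this
    
lemma master {g : ℝ → ℝ} (hg : ContinuousOn g (Set.Icc 0 1)) (m : ℕ) {y x₀ : ℝ}
    (hx₀D : x₀ ∈ DC g m) (hgx₀ : g x₀ = y)
    (hacc : ∀ δ > 0, ∃ z, z ∈ Set.Icc (0:ℝ) 1 ∧ g z = y ∧ x₀ < z ∧ z < x₀ + δ)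
    (h1 : ¬ (DC g m ∩ g ⁻¹' {y}).Infinite)
    (h2 : y ∉ g '' Rset g m)
    (h3 : {s | s ∈ Rset g m ∧ y ∈ Jset g m s}.Finite) : False := by
  have hFD : (DC g m ∩ g ⁻¹' {y}).Finite := Set.not_infinite.1 h1
  obtain ⟨δ₁, hδ₁pos, hδ₁⟩ := avoid_finite hFD x₀
  obtain ⟨δ₃, hδ₃pos, hδ₃⟩ := avoid_finite h3 x₀
  set δ := min (min δ₁ δ₃) (eta m) with hδ
  have hδpos : 0 < δ := lt_min (lt_min hδ₁pos hδ₃pos) (eta_pos m)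
  obtain ⟨z, hzI, hzy, hzgt, hzlt⟩ := hacc δ hδpos
  have hzD : z ∉ DC g m := by
    intro hzD
    exact hδ₁ z ⟨hzD, hzy⟩ ⟨hzgt, lt_of_lt_of_le hzlt (by
      have : δ ≤ δ₁ := le_trans (min_le_left _ _) (min_le_left _ _)
      linarith)⟩
  set S := DC g m ∩ Set.Icc x₀ z with hS
  have hSne : S.Nonempty := ⟨x₀, hx₀D, le_refl x₀, le_of_lt hzgt⟩
  have hSbdd : BddAbove S := ⟨z, fun w hw => hw.2.2⟩
  have hSclosed : IsClosed S := (isClosed_DC g m).inter isClosed_Icc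
  set s₀ := sSup S with hs₀
  have hs₀S : s₀ ∈ S := hSclosed.csSup_mem hSne hSbdd
  have hs₀D : s₀ ∈ DC g m := hs₀S.1
  have hx₀le : x₀ ≤ s₀ := le_csSup hSbdd ⟨hx₀D, le_refl x₀, le_of_lt hzgt⟩
  have hs₀lt : s₀ < z := lt_of_le_of_ne hs₀S.2.2 (fun h => hzD (h ▸ hs₀D))
  have hgap : ∀ w ∈ DC g m, w ∉ Set.Ioc s₀ z := by
    rintro w hwD ⟨hw1, hw2⟩
    have : w ≤ s₀ := le_csSup hSbdd ⟨hwD, le_trans hx₀le (le_of_lt hw1), hw2⟩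
    linarith
  have hell := le_ell g m hs₀lt hgap
  have hzs₀ : z - s₀ ≤ eta m := by
    have : δ ≤ eta m := min_le_right _ _
    linarith
  have hellge : z - s₀ ≤ ell g m s₀ := by
    rw [min_eq_right hzs₀] at hell
    exact hell
  have hellpos : 0 < ell g m s₀ := lt_of_lt_of_le (by linarith) hellge
  have hs₀R : s₀ ∈ Rset g m := ⟨hs₀D, hellpos⟩
  have hcone := cone hg m hs₀D hzI (by
    rw [Real.dist_eq, abs_of_nonneg (by linarith)]
    exact hzs₀)
  have hyJ : y ∈ Jset g m s₀ := by
    simp only [Real.dist_eq] at hcone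
    rw [abs_of_nonneg (by linarith : (0:ℝ) ≤ z - s₀)] at hcone
    have habs : |y - g s₀| ≤ ((m:ℝ) + 1) * ell g m s₀ := by
      rw [← hzy]
      calc |g z - g s₀| ≤ ((m:ℝ) + 1) * (z - s₀) := hcone
      _ ≤ ((m:ℝ) + 1) * ell g m s₀ := by
          apply mul_le_mul_of_nonneg_left hellge (by positivity)
    rw [abs_le] at habs
    exact ⟨by linarith [habs.1], by linarith [habs.2]⟩
  have hs₀eq : s₀ = x₀ := by
    by_contra hne
    have hlt : x₀ < s₀ := lt_of_le_of_ne hx₀le (Ne.symm hne)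
    refine hδ₃ s₀ ⟨hs₀R, hyJ⟩ ⟨hlt, ?_⟩
    have : δ ≤ δ₃ := le_trans (min_le_left _ _) (min_le_right _ _)
    linarith
  exact h2 ⟨x₀, hs₀eq ▸ hs₀R, hgx₀⟩

lemma coverage {f : ℝ → ℝ} {x : ℝ} (hx : x ∈ Set.Icc (0:ℝ) 1)
    (h : upperScaledOsc (Set.Icc 0 1) f x < ⊤) : ∃ m : ℕ, x ∈ Dset f m := by
  set u : ℝ → ℝ≥0∞ := fun r =>
    (⨆ (y : ℝ) (_ : y ∈ Set.Icc (0:ℝ) 1) (_ : dist y x ≤ r), ENNReal.ofReal (dist (f y) (f x))) /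
      ENNReal.ofReal r with hu
  have hlim : Filter.limsup u (nhdsWithin 0 (Set.Ioi 0)) < ⊤ := h
  set c := Filter.limsup u (nhdsWithin 0 (Set.Ioi 0)) + 1 with hc
  have hcne : c ≠ ⊤ := ENNReal.add_ne_top.2 ⟨ne_of_lt hlim, ENNReal.one_ne_top⟩
  have hlt : Filter.limsup u (nhdsWithin 0 (Set.Ioi 0)) < c :=
    ENNReal.lt_add_right (ne_of_lt hlim) one_ne_zero
  have hev : ∀ᶠ r in nhdsWithin 0 (Set.Ioi 0), u r < c :=
    Filter.eventually_lt_of_limsup_lt hlt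
  rw [Filter.eventually_iff] at hev
  obtain ⟨δ, hδ0, hδsub⟩ := mem_nhdsGT_iff_exists_Ioo_subset.1 hev
  have hδpos : (0:ℝ) < δ := hδ0
  have key : ∀ z ∈ Set.Icc (0:ℝ) 1, 0 < dist z x → dist z x < δ →
      dist (f z) (f x) ≤ c.toReal * dist z x := by
    intro z hz hd0 hdδ
    have hr : dist z x ∈ Set.Ioo (0:ℝ) δ := ⟨hd0, hdδ⟩
    have hur : u (dist z x) < c := hδsub hr
    rw [hu] at hur
    simp only at hur
    have hnum : ENNReal.ofReal (dist (f z) (f x)) ≤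
        (⨆ (y : ℝ) (_ : y ∈ Set.Icc (0:ℝ) 1) (_ : dist y x ≤ dist z x),
          ENNReal.ofReal (dist (f y) (f x))) := by
      refine le_iSup_of_le z ?_
      exact le_iSup_of_le hz (le_iSup_of_le (le_refl (dist z x)) le_rfl)
    have hne0 : ENNReal.ofReal (dist z x) ≠ 0 := (ENNReal.ofReal_pos.2 hd0).ne'
    have hnetop : ENNReal.ofReal (dist z x) ≠ ⊤ := ENNReal.ofReal_ne_top
    have hmul : (⨆ (y : ℝ) (_ : y ∈ Set.Icc (0:ℝ) 1) (_ : dist y x ≤ dist z x),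
        ENNReal.ofReal (dist (f y) (f x))) < c * ENNReal.ofReal (dist z x) :=
      (ENNReal.div_lt_iff (Or.inl hne0) (Or.inl hnetop)).1 hur
    have : ENNReal.ofReal (dist (f z) (f x)) < c * ENNReal.ofReal (dist z x) :=
      lt_of_le_of_lt hnum hmul
    rw [← ENNReal.ofReal_toReal hcne, ← ENNReal.ofReal_mul ENNReal.toReal_nonneg] at this
    have := le_of_lt ((ENNReal.ofReal_lt_ofReal_iff_of_nonneg dist_nonneg).1 this)
    exact this
  obtain ⟨n, hn⟩ := exists_nat_gt (max c.toReal (1/δ))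
  refine ⟨n, hx, ?_⟩
  intro z hz hdist
  have h2eta : 2 * eta n = 1 / ((n:ℝ) + 1) := by rw [eta]; field_simp
  rcases eq_or_lt_of_le (dist_nonneg : (0:ℝ) ≤ dist z x) with h0 | h0
  · have : z = x := by
      have := dist_eq_zero.1 h0.symm
      exact this
    rw [this]
    simp
  · have hdistδ : dist z x < δ := by
      have h1 : (1:ℝ)/δ < n := lt_of_le_of_lt (le_max_right _ _) hn
      have h2 : 1 / ((n:ℝ) + 1) < δ := by
        rw [div_lt_iff₀ (by positivity)]
        rw [div_lt_iff₀ hδpos] at h1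
        nlinarith [hδpos]
      calc dist z x ≤ 2 * eta n := hdist
      _ = 1 / ((n:ℝ)+1) := h2eta
      _ < δ := h2
    have := key z hz h0 hdistδ
    calc dist (f z) (f x) ≤ c.toReal * dist z x := this
    _ ≤ ((n:ℝ) + 1) * dist z x := by
        apply mul_le_mul_of_nonneg_right _ dist_nonneg
        have := le_max_left c.toReal (1/δ)
        linarith [lt_of_le_of_lt (le_max_left c.toReal (1/δ)) hn]

lemma mirror_Dset {g : ℝ → ℝ} {m : ℕ} {x : ℝ} (hx : x ∈ Dset g m) :
    (1 - x) ∈ Dset (fun t => g (1 - t)) m := by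
  obtain ⟨hxI, hxP⟩ := hx
  obtain ⟨hxI1, hxI2⟩ := hxI
  refine ⟨⟨by linarith, by linarith⟩, ?_⟩
  intro z hz hd
  have hz' : 1 - z ∈ Set.Icc (0:ℝ) 1 := ⟨by linarith [hz.2], by linarith [hz.1]⟩
  have hdist : dist (1 - z) x = dist z (1 - x) := by
    rw [Real.dist_eq, Real.dist_eq, show (1 - z) - x = -(z - (1 - x)) by ring, abs_neg]
  have := hxP (1 - z) hz' (by rwa [hdist])
  simp only [show (1:ℝ) - (1 - x) = x by ring]
  rwa [hdist] at this

lemma exists_acc {F : Set ℝ} (hF : F ⊆ Set.Icc 0 1) (hclosed : IsClosed F) (hinf : F.Infinite) :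
    ∃ x₀ ∈ F, ∀ δ > 0, ∃ z ∈ F, z ≠ x₀ ∧ |z - x₀| < δ := by
  let e := hinf.natEmbedding
  set x : ℕ → ℝ := fun n => (e n : ℝ) with hx
  have hxS : ∀ n, x n ∈ F := fun n => (e n).2
  have hxinj : Function.Injective x := fun a b hab => e.injective (Subtype.ext hab)
  obtain ⟨xs, hxsI, φ, hφ, hconv⟩ := isCompact_Icc.tendsto_subseq (fun n => hF (hxS n))
  have hinj2 : Function.Injective (x ∘ φ) := hxinj.comp hφ.injective
  obtain ⟨k₀, hk₀⟩ : ∃ k₀, ∀ k, x (φ (k + k₀)) ≠ xs := by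
    by_cases hex : ∃ j, x (φ j) = xs
    · obtain ⟨j, hj⟩ := hex
      refine ⟨j + 1, fun k hk => ?_⟩
      have : x (φ (k + (j+1))) = x (φ j) := by rw [hk, hj]
      have := hinj2 this
      omega
    · exact ⟨0, fun k hk => hex ⟨_, hk⟩⟩
  set v : ℕ → ℝ := fun k => x (φ (k + k₀)) with hv
  have hvS : ∀ k, v k ∈ F := fun k => hxS _
  have hvconv : Filter.Tendsto v atTop (𝓝 xs) := by
    have := hconv.comp (tendsto_add_atTop_nat k₀)
    simpa [hv, Function.comp_def] using this
  have hxsF : xs ∈ F := hclosed.mem_of_tendsto hvconv (Filter.Eventually.of_forall hvS)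
  refine ⟨xs, hxsF, fun δ hδ => ?_⟩
  obtain ⟨N, hN⟩ := Metric.tendsto_atTop.1 hvconv δ hδ
  refine ⟨v N, hvS N, hk₀ N, ?_⟩
  have := hN N (le_refl N)
  rwa [Real.dist_eq] at this

end

end Stmt7

/-- If `f : [0,1] → ℝ` is continuous and its upper-scaled oscillation is finite at
all but countably many points, then Lebesgue-a.e. level set of `f` is finite. -/
theorem stmt7 (f : ℝ → ℝ) (hf : ContinuousOn f (Set.Icc 0 1))
    (C : Set ℝ) (hC : C.Countable)
    (hL : ∀ x ∈ Set.Icc (0:ℝ) 1 \ C, upperScaledOsc (Set.Icc 0 1) f x < ⊤) :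
    ∀ᵐ y ∂(volume : Measure ℝ), (Set.Icc (0:ℝ) 1 ∩ f ⁻¹' {y}).Finite := by
  classical
  set f' : ℝ → ℝ := fun t => f (1 - t) with hf'def
  have hf'c : ContinuousOn f' (Set.Icc 0 1) := by
    apply hf.comp ((continuous_const.sub continuous_id).continuousOn)
    intro t ht
    exact ⟨by simp; linarith [ht.2], by simp; linarith [ht.1]⟩
  have E1 : ∀ᵐ y : ℝ, y ∉ f '' C :=
    measure_eq_zero_iff_ae_notMem.mp ((hC.image f).measure_zero _)
  have E2 : ∀ᵐ y : ℝ, ∀ m : ℕ, ¬ (Stmt7.DC f m ∩ f ⁻¹' {y}).Infinite :=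
    ae_all_iff.2 fun m => Stmt7.lemmaA hf m
  have E3 : ∀ᵐ y : ℝ, ∀ m : ℕ, y ∉ f '' Stmt7.Rset f m :=
    ae_all_iff.2 fun m =>
      measure_eq_zero_iff_ae_notMem.mp (((Stmt7.countable_Rset f m).image f).measure_zero _)
  have E4 : ∀ᵐ y : ℝ, ∀ m : ℕ, {s | s ∈ Stmt7.Rset f m ∧ y ∈ Stmt7.Jset f m s}.Finite :=
    ae_all_iff.2 fun m => Stmt7.lemmaC f m
  have E5 : ∀ᵐ y : ℝ, ∀ m : ℕ, ¬ (Stmt7.DC f' m ∩ f' ⁻¹' {y}).Infinite :=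
    ae_all_iff.2 fun m => Stmt7.lemmaA hf'c m
  have E6 : ∀ᵐ y : ℝ, ∀ m : ℕ, y ∉ f' '' Stmt7.Rset f' m :=
    ae_all_iff.2 fun m =>
      measure_eq_zero_iff_ae_notMem.mp (((Stmt7.countable_Rset f' m).image f').measure_zero _)
  have E7 : ∀ᵐ y : ℝ, ∀ m : ℕ, {s | s ∈ Stmt7.Rset f' m ∧ y ∈ Stmt7.Jset f' m s}.Finite :=
    ae_all_iff.2 fun m => Stmt7.lemmaC f' m
  filter_upwards [E1, E2, E3, E4, E5, E6, E7] with y hy1 hy2 hy3 hy4 hy5 hy6 hy7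
  by_contra hfin
  have hinf : (Set.Icc (0:ℝ) 1 ∩ f ⁻¹' {y}).Infinite := hfin
  have hclosed : IsClosed (Set.Icc (0:ℝ) 1 ∩ f ⁻¹' {y}) :=
    hf.preimage_isClosed_of_isClosed isClosed_Icc isClosed_singleton
  obtain ⟨x₀, hx₀F, hacc⟩ := Stmt7.exists_acc Set.inter_subset_left hclosed hinf
  have hx₀I : x₀ ∈ Set.Icc (0:ℝ) 1 := hx₀F.1
  have hfx₀ : f x₀ = y := hx₀F.2
  have hx₀C : x₀ ∉ C := fun h => hy1 ⟨x₀, h, hfx₀⟩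
  obtain ⟨m, hm⟩ := Stmt7.coverage hx₀I (hL x₀ ⟨hx₀I, hx₀C⟩)
  by_cases hr : ∀ δ > 0, ∃ z, z ∈ Set.Icc (0:ℝ) 1 ∧ f z = y ∧ x₀ < z ∧ z < x₀ + δ
  · exact Stmt7.master hf m (subset_closure hm) hfx₀ hr (hy2 m) (hy3 m) (hy4 m)
  · push_neg at hr
    obtain ⟨δa, hδa, ha⟩ := hr
    have hleft : ∀ δ > 0, ∃ z, z ∈ Set.Icc (0:ℝ) 1 ∧ f z = y ∧ x₀ - δ < z ∧ z < x₀ := by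
      intro δ hδ
      obtain ⟨z, hzF, hzne, hzd⟩ := hacc (min δ δa) (lt_min hδ hδa)
      obtain ⟨hzd1, hzd2⟩ := abs_lt.1 hzd
      rcases lt_or_gt_of_ne hzne with hlt | hgt
      · exact ⟨z, hzF.1, hzF.2, by linarith [min_le_left δ δa], hlt⟩
      · exfalso
        have := ha z hzF.1 hzF.2 hgt
        linarith [min_le_right δ δa]
    have hD' : (1 - x₀) ∈ Stmt7.DC f' m := subset_closure (Stmt7.mirror_Dset hm)
    have hf'x : f' (1 - x₀) = y := by
      rw [hf'def]
      simp only []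
      rw [show (1:ℝ) - (1 - x₀) = x₀ by ring]
      exact hfx₀
    have hacc' : ∀ δ > 0, ∃ z, z ∈ Set.Icc (0:ℝ) 1 ∧ f' z = y ∧ (1 - x₀) < z ∧ z < (1 - x₀) + δ := by
      intro δ hδ
      obtain ⟨z, hzI, hzy, hz1, hz2⟩ := hleft δ hδ
      refine ⟨1 - z, ⟨by linarith [hzI.2], by linarith [hzI.1]⟩, ?_, by linarith, by linarith⟩
      rw [hf'def]
      simp only []
      rw [show (1:ℝ) - (1 - z) = z by ring]
      exact hzy
    exact Stmt7.master hf'c m hD' hf'x hacc' (hy5 m) (hy6 m) (hy7 m)
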